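/- For all integers m and n, with x = 4(n^2-2m^2)(n^2+2mn+2m^2)(n^2+4mn+2m^2), c1 = (n^2+4mn+2m^2)(n^2+4mn+6m^2)(3n^2+4mn+2m^2), and d1 = (n^2+4mn+2m^2)(5n^4+16mn^3+28m^2n^2+32m^3n+20m^4), the identity x^2 + c1^2 = d1^2 holds. -/
import Mathlib


theorem stmt_2 (m n x c1 d1 : ℤ)
    (hx : x = 4*(n^2-2*m^2)*(n^2+2*m*n+2*m^2)*(n^2+4*m*n+2*m^2))
    (hc1 : c1 = (n^2+4*m*n+2*m^2)*(n^2+4*m*n+6*m^2)*(3*n^2+4*m*n+2*m^2))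
    (hd1 : d1 = (n^2+4*m*n+2*m^2)*(5*n^4+16*m*n^3+28*m^2*n^2+32*m^3*n+20*m^4)) :
    x^2 + c1^2 = d1^2 := by subst hx hc1 hd1; ring
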